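/- Let R and B be finite sets of points in ℝ² in general position, and let W be a wedge bounded by lines ℓ₁, ℓ₂ such that at least one point of B is correctly classified by W (i.e. lies in closure(W)) and at least one point of R is correctly classified by W (i.e. lies outside interior(W)). Then there exist lines ℓ₁' and ℓ₂', each containing at least one point of R and at least one point of B, and a wedge W' bounded by ℓ₁' and ℓ₂', such that E(W') ⊆ E(W). -/

import Mathlib

open Classical

noncomputable section

/-- Points in the plane. -/
abbrev Pt : Type := EuclideanSpace ℝ (Fin 2)

/-- The closed halfplane `{x : ⟪v, x⟫ ≤ c}`, bounded by the line `{x : ⟪v, x⟫ = c}`. -/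
def halfplane (v : Pt) (c : ℝ) : Set Pt := {x | (inner ℝ v x : ℝ) ≤ c}

/-- The misclassified points: red points in the interior of `W` together with
blue points outside the closure of `W`. -/
def errSet (R B : Finset Pt) (W : Set Pt) : Finset Pt :=
  (R.filter fun p => p ∈ interior W) ∪ (B.filter fun p => p ∉ closure W)

/-- General position: no three points collinear, and pairwise distinct
`x`-coordinates. -/
def GenPos (P : Finset Pt) : Prop :=
  (∀ p ∈ P, ∀ q ∈ P, ∀ r ∈ P, p ≠ q → p ≠ r → q ≠ r →
      ¬ Collinear ℝ ({p, q, r} : Set Pt)) ∧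
  (∀ p ∈ P, ∀ q ∈ P, p ≠ q → p 0 ≠ q 0)

lemma halfplane_closed (v : Pt) (c : ℝ) : IsClosed (halfplane v c) :=
  isClosed_le (Continuous.inner continuous_const continuous_id) continuous_const

lemma interior_halfplane (v : Pt) (c : ℝ) (hv : v ≠ 0) :
    interior (halfplane v c) = {x | (inner ℝ v x : ℝ) < c} := by
  have hnv : (0:ℝ) < ‖v‖ := norm_pos_iff.mpr hv
  apply subset_antisymm
  · intro x hx
    rcases Metric.isOpen_iff.mp isOpen_interior x hx with ⟨ε, hε, hball⟩
    have hδ : (0:ℝ) < ε / (2 * ‖v‖) := by positivity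
    have hx2 : x + (ε / (2 * ‖v‖)) • v ∈ halfplane v c := by
      apply interior_subset; apply hball
      rw [Metric.mem_ball, dist_self_add_left, norm_smul, Real.norm_eq_abs, abs_of_pos hδ]
      rw [div_mul_eq_mul_div, mul_comm 2 ‖v‖, mul_comm ε ‖v‖,
        mul_div_mul_left _ _ (ne_of_gt hnv)]
      linarith
    have h2 : (inner ℝ v (x + (ε / (2 * ‖v‖)) • v) : ℝ)
        = inner ℝ v x + (ε / (2 * ‖v‖)) * ‖v‖^2 := by
      rw [inner_add_right, real_inner_smul_right, real_inner_self_eq_norm_sq]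
    have hpos : (0:ℝ) < (ε / (2 * ‖v‖)) * ‖v‖^2 := by positivity
    have h3 := hx2
    simp only [halfplane, Set.mem_setOf_eq] at h3 ⊢
    rw [h2] at h3
    linarith
  · apply interior_maximal
    · intro x hx
      simp only [Set.mem_setOf_eq] at hx
      exact le_of_lt hx
    · exact isOpen_lt (Continuous.inner continuous_const continuous_id) continuous_const

lemma cont_inner_right (r : Pt) : Continuous fun u : Pt => (inner ℝ u r : ℝ) :=
  Continuous.inner continuous_id continuous_const

lemma cont_inf' (s : Finset Pt) (hs : s.Nonempty) :
    Continuous (fun u : Pt => s.inf' hs (fun r => (inner ℝ u r : ℝ))) := by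
  induction hs using Finset.Nonempty.cons_induction with
  | singleton a => simpa using cont_inner_right a
  | cons a s ha hs ih =>
      simp only [Finset.inf'_cons hs]
      exact Continuous.min (cont_inner_right a) ih

lemma cont_sup' (s : Finset Pt) (hs : s.Nonempty) :
    Continuous (fun u : Pt => s.sup' hs (fun r => (inner ℝ u r : ℝ))) := by
  induction hs using Finset.Nonempty.cons_induction with
  | singleton a => simpa using cont_inner_right a
  | cons a s ha hs ih =>
      simp only [Finset.sup'_cons hs]
      exact Continuous.max (cont_inner_right a) ih

lemma seg_zero (h : Pt → ℝ) (hc : Continuous h) (x y : Pt) (hx0 : x ≠ 0) (hy0 : y ≠ 0)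
    (hxy : (0:ℝ) ≤ inner ℝ x y) (hx : 0 ≤ h x) (hy : h y ≤ 0) :
    ∃ z : Pt, z ≠ 0 ∧ h z = 0 := by
  set g : ℝ → ℝ := fun t => h ((1 - t) • x + t • y) with hg
  have hgc : Continuous g := by
    apply hc.comp
    exact ((continuous_const.sub continuous_id).smul continuous_const).add
      (continuous_id.smul continuous_const)
  have h01 : (0:ℝ) ≤ 1 := zero_le_one
  have hmem : (0:ℝ) ∈ Set.Icc (g 1) (g 0) := by
    constructor <;> simp [hg, hy, hx]
  have := intermediate_value_Icc' h01 hgc.continuousOn hmem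
  rcases this with ⟨t, ht, hgt⟩
  refine ⟨(1 - t) • x + t • y, ?_, hgt⟩
  intro hzero
  have hinner : (inner ℝ x ((1 - t) • x + t • y) : ℝ) = 0 := by rw [hzero, inner_zero_right]
  rw [inner_add_right, real_inner_smul_right, real_inner_smul_right,
    real_inner_self_eq_norm_sq] at hinner
  have hnx : (0:ℝ) < ‖x‖ := norm_pos_iff.mpr hx0
  have hxx : (0:ℝ) < ‖x‖^2 := by positivity
  have ht0 := ht.1
  have ht1 := ht.2
  have h1 : (1 - t) * ‖x‖^2 = 0 := by nlinarith [mul_nonneg ht0 hxy]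
  have ht' : t = 1 := by
    rcases mul_eq_zero.mp h1 with h | h
    · linarith
    · linarith
  rw [ht'] at hzero
  simp at hzero
  exact hy0 hzero

lemma exists_zero (h : Pt → ℝ) (hc : Continuous h) (x y : Pt) (hx0 : x ≠ 0) (hy0 : y ≠ 0)
    (hx : 0 ≤ h x) (hy : h y < 0) : ∃ z : Pt, z ≠ 0 ∧ h z = 0 := by
  by_cases hxy : (0:ℝ) ≤ inner ℝ x y
  · exact seg_zero h hc x y hx0 hy0 hxy hx hy.le
  · -- pick w ⊥ x with ⟪w, y⟫ ≥ 0
    push_neg at hxy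
    set w0 : Pt := !₂[-(x 1), x 0] with hw0
    have hw0ne : w0 ≠ 0 := by
      intro hw
      apply hx0
      have h1 : w0 0 = 0 := by rw [hw]; rfl
      have h2 : w0 1 = 0 := by rw [hw]; rfl
      simp [hw0] at h1 h2
      ext i
      fin_cases i <;> simp [h1, h2]
    have hwx : (inner ℝ x w0 : ℝ) = 0 := by
      simp [hw0, PiLp.inner_apply, Fin.sum_univ_two]
      ring
    set w : Pt := if (0:ℝ) ≤ inner ℝ w0 y then w0 else -w0 with hw
    have hwne : w ≠ 0 := by
      rw [hw]; split
      · exact hw0ne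
      · simpa using hw0ne
    have hwy : (0:ℝ) ≤ inner ℝ w y := by
      rw [hw]; split
      · assumption
      · rw [inner_neg_left]; linarith [lt_of_not_ge (by assumption : ¬ (0:ℝ) ≤ inner ℝ w0 y)]
    have hxw : (inner ℝ x w : ℝ) = 0 := by
      rw [hw]; split
      · exact hwx
      · rw [inner_neg_right, hwx]; ring
    by_cases hhw : 0 ≤ h w
    · exact seg_zero h hc w y hwne hy0 hwy hhw hy.le
    · push_neg at hhw
      have hwx' : (0:ℝ) ≤ inner ℝ x w := le_of_eq hxw.symm
      exact seg_zero h hc x w hx0 hwne hwx' hx hhw.le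

/-- Key lemma: two nonempty finite weakly separable point sets admit a weak
separator passing through a point of each. -/
lemma touching_separator (Bp Ti : Finset Pt) (hBp : Bp.Nonempty) (hTi : Ti.Nonempty)
    (v : Pt) (c : ℝ) (hv : v ≠ 0)
    (hB : ∀ b ∈ Bp, (inner ℝ v b : ℝ) ≤ c) (hT : ∀ r ∈ Ti, c ≤ (inner ℝ v r : ℝ)) :
    ∃ (v' : Pt) (c' : ℝ), v' ≠ 0 ∧
      (∀ b ∈ Bp, (inner ℝ v' b : ℝ) ≤ c') ∧ (∀ r ∈ Ti, c' ≤ (inner ℝ v' r : ℝ)) ∧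
      (∃ b ∈ Bp, (inner ℝ v' b : ℝ) = c') ∧ (∃ r ∈ Ti, (inner ℝ v' r : ℝ) = c') := by
  set h : Pt → ℝ := fun u =>
    Ti.inf' hTi (fun r => (inner ℝ u r : ℝ)) - Bp.sup' hBp (fun b => (inner ℝ u b : ℝ)) with hh
  have hc : Continuous h := (cont_inf' Ti hTi).sub (cont_sup' Bp hBp)
  have hhv : 0 ≤ h v := by
    have h1 : Bp.sup' hBp (fun b => (inner ℝ v b : ℝ)) ≤ c := Finset.sup'_le _ _ hB
    have h2 : c ≤ Ti.inf' hTi (fun r => (inner ℝ v r : ℝ)) := Finset.le_inf' _ _ hT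
    simp only [hh]; linarith
  by_cases hexist : ∃ u : Pt, u ≠ 0 ∧ h u < 0
  · rcases hexist with ⟨u, hu0, hu⟩
    rcases exists_zero h hc v u hv hu0 hhv hu with ⟨z, hz0, hz⟩
    have heq : Ti.inf' hTi (fun r => (inner ℝ z r : ℝ))
        = Bp.sup' hBp (fun b => (inner ℝ z b : ℝ)) := by
      simp only [hh] at hz; linarith
    refine ⟨z, Bp.sup' hBp (fun b => (inner ℝ z b : ℝ)), hz0, ?_, ?_, ?_, ?_⟩
    · exact fun b hb => Finset.le_sup' _ hb
    · intro r hr; rw [← heq]; exact Finset.inf'_le _ hr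
    · rcases Finset.exists_mem_eq_sup' hBp (fun b => (inner ℝ z b : ℝ)) with ⟨b, hbm, hb2⟩
      exact ⟨b, hbm, hb2.symm⟩
    · rcases Finset.exists_mem_eq_inf' hTi (fun r => (inner ℝ z r : ℝ)) with ⟨r, hr, hr2⟩
      exact ⟨r, hr, by rw [← heq, ← hr2]⟩
  · -- all points coincide
    push_neg at hexist
    have hall : ∀ b ∈ Bp, ∀ r ∈ Ti, b = r := by
      intro b hb r hr
      by_contra hne
      have hbr : b - r ≠ 0 := sub_ne_zero.mpr hne
      have h1 := hexist (b - r) hbr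
      have h2 : (inner ℝ (b - r) b : ℝ) ≤ Bp.sup' hBp (fun b' => (inner ℝ (b-r) b' : ℝ)) :=
        Finset.le_sup' _ hb
      have h3 : Ti.inf' hTi (fun r' => (inner ℝ (b-r) r' : ℝ)) ≤ (inner ℝ (b - r) r : ℝ) :=
        Finset.inf'_le _ hr
      simp only [hh] at h1
      have h4 : (inner ℝ (b - r) b : ℝ) ≤ (inner ℝ (b - r) r : ℝ) := by linarith
      have h5 : (inner ℝ (b - r) (b - r) : ℝ) ≤ 0 := by
        rw [inner_sub_right]; linarith
      rw [real_inner_self_eq_norm_sq] at h5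
      have : (0:ℝ) < ‖b - r‖ := norm_pos_iff.mpr hbr
      nlinarith
    rcases hBp with ⟨b0, hb0⟩
    rcases hTi with ⟨r0, hr0⟩
    have hbr0 := hall b0 hb0 r0 hr0
    refine ⟨v, (inner ℝ v b0 : ℝ), hv, ?_, ?_, ⟨b0, hb0, rfl⟩, ⟨r0, hr0, by rw [← hbr0]⟩⟩
    · intro b hb
      rw [hall b hb r0 hr0, ← hbr0]
    · intro r hr
      rw [← hall b0 hb0 r hr]

lemma closure_wedge (v₁ v₂ : Pt) (c₁ c₂ : ℝ) :
    closure (halfplane v₁ c₁ ∩ halfplane v₂ c₂) = halfplane v₁ c₁ ∩ halfplane v₂ c₂ :=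
  ((halfplane_closed v₁ c₁).inter (halfplane_closed v₂ c₂)).closure_eq

lemma interior_wedge (v₁ v₂ : Pt) (c₁ c₂ : ℝ) (hv₁ : v₁ ≠ 0) (hv₂ : v₂ ≠ 0) :
    interior (halfplane v₁ c₁ ∩ halfplane v₂ c₂)
      = {x | (inner ℝ v₁ x : ℝ) < c₁} ∩ {x | (inner ℝ v₂ x : ℝ) < c₂} := by
  rw [interior_inter, interior_halfplane v₁ c₁ hv₁, interior_halfplane v₂ c₂ hv₂]


/-- Any wedge that correctly classifies at least one blue and one red point can
be replaced by a wedge whose two boundary lines each pass through a red point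
and a blue point, without misclassifying any additional points. -/
theorem wedge_lines_through_red_and_blue (R B : Finset Pt) (hgen : GenPos (B ∪ R))
    (v₁ v₂ : Pt) (c₁ c₂ : ℝ) (hv₁ : v₁ ≠ 0) (hv₂ : v₂ ≠ 0)
    (hb : ∃ b ∈ B, b ∈ closure (halfplane v₁ c₁ ∩ halfplane v₂ c₂))
    (hr : ∃ r ∈ R, r ∉ interior (halfplane v₁ c₁ ∩ halfplane v₂ c₂)) :
    ∃ (v₁' v₂' : Pt) (c₁' c₂' : ℝ), v₁' ≠ 0 ∧ v₂' ≠ 0 ∧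
      (∃ r ∈ R, (inner ℝ v₁' r : ℝ) = c₁') ∧ (∃ b ∈ B, (inner ℝ v₁' b : ℝ) = c₁') ∧
      (∃ r ∈ R, (inner ℝ v₂' r : ℝ) = c₂') ∧ (∃ b ∈ B, (inner ℝ v₂' b : ℝ) = c₂') ∧
      errSet R B (halfplane v₁' c₁' ∩ halfplane v₂' c₂') ⊆
        errSet R B (halfplane v₁ c₁ ∩ halfplane v₂ c₂) := by
  classical
  set Bp : Finset Pt :=
    B.filter (fun b => (inner ℝ v₁ b : ℝ) ≤ c₁ ∧ (inner ℝ v₂ b : ℝ) ≤ c₂) with hBpdef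
  set T₁ : Finset Pt := R.filter (fun r => c₁ ≤ (inner ℝ v₁ r : ℝ)) with hT₁def
  set T₂ : Finset Pt := R.filter (fun r => c₂ ≤ (inner ℝ v₂ r : ℝ)) with hT₂def
  -- Bp is nonempty
  obtain ⟨b₁, hb₁B, hb₁W⟩ := hb
  rw [closure_wedge] at hb₁W
  have hb₁Bp : b₁ ∈ Bp := by
    rw [hBpdef, Finset.mem_filter]
    exact ⟨hb₁B, hb₁W.1, hb₁W.2⟩
  have hBpne : Bp.Nonempty := ⟨b₁, hb₁Bp⟩
  -- the red witness is in T₁ ∪ T₂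
  obtain ⟨r₀, hr₀R, hr₀W⟩ := hr
  rw [interior_wedge v₁ v₂ c₁ c₂ hv₁ hv₂] at hr₀W
  have hr₀T : c₁ ≤ (inner ℝ v₁ r₀ : ℝ) ∨ c₂ ≤ (inner ℝ v₂ r₀ : ℝ) := by
    by_contra hcon
    push_neg at hcon
    exact hr₀W ⟨hcon.1, hcon.2⟩
  have hBp1 : ∀ b ∈ Bp, (inner ℝ v₁ b : ℝ) ≤ c₁ := by
    intro b hbm; rw [hBpdef, Finset.mem_filter] at hbm; exact hbm.2.1
  have hBp2 : ∀ b ∈ Bp, (inner ℝ v₂ b : ℝ) ≤ c₂ := by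
    intro b hbm; rw [hBpdef, Finset.mem_filter] at hbm; exact hbm.2.2
  have hT₁R : T₁ ⊆ R := Finset.filter_subset _ _
  have hT₂R : T₂ ⊆ R := Finset.filter_subset _ _
  have hBpB : Bp ⊆ B := Finset.filter_subset _ _
  -- uniform finishing move
  have final : ∀ (v₁' v₂' : Pt) (c₁' c₂' : ℝ), v₁' ≠ 0 → v₂' ≠ 0 →
      (∀ b ∈ Bp, (inner ℝ v₁' b : ℝ) ≤ c₁') → (∀ b ∈ Bp, (inner ℝ v₂' b : ℝ) ≤ c₂') →
      (∀ r ∈ T₁, c₁' ≤ (inner ℝ v₁' r : ℝ)) → (∀ r ∈ T₂, c₂' ≤ (inner ℝ v₂' r : ℝ)) →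
      (∃ b ∈ Bp, (inner ℝ v₁' b : ℝ) = c₁') → (∃ r ∈ R, (inner ℝ v₁' r : ℝ) = c₁') →
      (∃ b ∈ Bp, (inner ℝ v₂' b : ℝ) = c₂') → (∃ r ∈ R, (inner ℝ v₂' r : ℝ) = c₂') →
      ∃ (v₁' v₂' : Pt) (c₁' c₂' : ℝ), v₁' ≠ 0 ∧ v₂' ≠ 0 ∧
      (∃ r ∈ R, (inner ℝ v₁' r : ℝ) = c₁') ∧ (∃ b ∈ B, (inner ℝ v₁' b : ℝ) = c₁') ∧
      (∃ r ∈ R, (inner ℝ v₂' r : ℝ) = c₂') ∧ (∃ b ∈ B, (inner ℝ v₂' b : ℝ) = c₂') ∧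
      errSet R B (halfplane v₁' c₁' ∩ halfplane v₂' c₂') ⊆
        errSet R B (halfplane v₁ c₁ ∩ halfplane v₂ c₂) := by
    intro v₁' v₂' c₁' c₂' hv₁' hv₂' hB1 hB2 hR1 hR2 hbl1 hrl1 hbl2 hrl2
    obtain ⟨bb1, hbb1, hbb1e⟩ := hbl1
    obtain ⟨bb2, hbb2, hbb2e⟩ := hbl2
    refine ⟨v₁', v₂', c₁', c₂', hv₁', hv₂', hrl1, ⟨bb1, hBpB hbb1, hbb1e⟩,
      hrl2, ⟨bb2, hBpB hbb2, hbb2e⟩, ?_⟩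
    intro p hp
    rw [errSet, Finset.mem_union, Finset.mem_filter, Finset.mem_filter] at hp
    rcases hp with ⟨hpR, hpint⟩ | ⟨hpB, hpcl⟩
    · -- red point misclassified by new wedge
      rw [interior_wedge v₁' v₂' c₁' c₂' hv₁' hv₂'] at hpint
      obtain ⟨hs1, hs2⟩ := hpint
      simp only [Set.mem_setOf_eq] at hs1 hs2
      have hpint' : p ∈ interior (halfplane v₁ c₁ ∩ halfplane v₂ c₂) := by
        rw [interior_wedge v₁ v₂ c₁ c₂ hv₁ hv₂]
        constructor <;> simp only [Set.mem_setOf_eq] <;> by_contra hcon <;> push_neg at hcon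
        · exact absurd (hR1 p (by rw [hT₁def, Finset.mem_filter]; exact ⟨hpR, hcon⟩))
            (not_le.mpr hs1)
        · exact absurd (hR2 p (by rw [hT₂def, Finset.mem_filter]; exact ⟨hpR, hcon⟩))
            (not_le.mpr hs2)
      rw [errSet, Finset.mem_union, Finset.mem_filter]
      exact Or.inl ⟨hpR, hpint'⟩
    · -- blue point misclassified by new wedge
      have hpcl' : p ∉ closure (halfplane v₁ c₁ ∩ halfplane v₂ c₂) := by
        rw [closure_wedge]
        intro hpW
        apply hpcl
        rw [closure_wedge]
        have hpBp : p ∈ Bp := by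
          rw [hBpdef, Finset.mem_filter]; exact ⟨hpB, hpW.1, hpW.2⟩
        exact ⟨hB1 p hpBp, hB2 p hpBp⟩
      rw [errSet, Finset.mem_union, Finset.mem_filter, Finset.mem_filter]
      exact Or.inr ⟨hpB, hpcl'⟩
  by_cases h1 : T₁.Nonempty <;> by_cases h2 : T₂.Nonempty
  · obtain ⟨w₁, d₁, hw₁, hBw₁, hTw₁, hbw₁, hrw₁⟩ :=
      touching_separator Bp T₁ hBpne h1 v₁ c₁ hv₁ hBp1
        (fun r hrm => by rw [hT₁def, Finset.mem_filter] at hrm; exact hrm.2)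
    obtain ⟨w₂, d₂, hw₂, hBw₂, hTw₂, hbw₂, hrw₂⟩ :=
      touching_separator Bp T₂ hBpne h2 v₂ c₂ hv₂ hBp2
        (fun r hrm => by rw [hT₂def, Finset.mem_filter] at hrm; exact hrm.2)
    exact final w₁ w₂ d₁ d₂ hw₁ hw₂ hBw₁ hBw₂ hTw₁ hTw₂ hbw₁
      (hrw₁.imp fun r hr => ⟨hT₁R hr.1, hr.2⟩) hbw₂
      (hrw₂.imp fun r hr => ⟨hT₂R hr.1, hr.2⟩)
  · -- T₂ empty, use line 1 for both
    obtain ⟨w₁, d₁, hw₁, hBw₁, hTw₁, hbw₁, hrw₁⟩ :=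
      touching_separator Bp T₁ hBpne h1 v₁ c₁ hv₁ hBp1
        (fun r hrm => by rw [hT₁def, Finset.mem_filter] at hrm; exact hrm.2)
    exact final w₁ w₁ d₁ d₁ hw₁ hw₁ hBw₁ hBw₁ hTw₁
      (fun r hrm => absurd ⟨r, hrm⟩ h2) hbw₁
      (hrw₁.imp fun r hr => ⟨hT₁R hr.1, hr.2⟩) hbw₁
      (hrw₁.imp fun r hr => ⟨hT₁R hr.1, hr.2⟩)
  · -- T₁ empty, use line 2 for both
    obtain ⟨w₂, d₂, hw₂, hBw₂, hTw₂, hbw₂, hrw₂⟩ :=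
      touching_separator Bp T₂ hBpne h2 v₂ c₂ hv₂ hBp2
        (fun r hrm => by rw [hT₂def, Finset.mem_filter] at hrm; exact hrm.2)
    exact final w₂ w₂ d₂ d₂ hw₂ hw₂ hBw₂ hBw₂
      (fun r hrm => absurd ⟨r, hrm⟩ h1) hTw₂ hbw₂
      (hrw₂.imp fun r hr => ⟨hT₂R hr.1, hr.2⟩) hbw₂
      (hrw₂.imp fun r hr => ⟨hT₂R hr.1, hr.2⟩)
  · -- both empty: contradiction with r₀
    exfalso
    rcases hr₀T with hc | hc
    · exact h1 ⟨r₀, by rw [hT₁def, Finset.mem_filter]; exact ⟨hr₀R, hc⟩⟩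
    · exact h2 ⟨r₀, by rw [hT₂def, Finset.mem_filter]; exact ⟨hr₀R, hc⟩⟩
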